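/- Let X be a collectionwise normal space and 𝒰 an open cover. If there is a sequence of open covers {𝒰_n} such that for every x ∈ U ∈ 𝒰 there exists n with st(x,𝒰_n) ⊆ U, then 𝒰 admits a 𝒰-small partition of unity. -/

import Mathlib

noncomputable section
open Set Topology TopologicalSpace

/-- `𝒰` is an open cover of `X`. -/
def IsOpenCover {X : Type} [TopologicalSpace X] (𝒰 : Set (Set X)) : Prop :=
  (∀ U ∈ 𝒰, IsOpen U) ∧ ⋃₀ 𝒰 = univ

/-- Star of a point with respect to a family of sets. -/
def ptStar {X : Type} (x : X) (𝒰 : Set (Set X)) : Set X := ⋃₀ {U | U ∈ 𝒰 ∧ x ∈ U}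

/-- Star of a set with respect to a family of sets. -/
def setStar {X : Type} (A : Set X) (𝒰 : Set (Set X)) : Set X :=
  ⋃₀ {U | U ∈ 𝒰 ∧ (U ∩ A).Nonempty}

/-- `𝒱` star-refines `𝒰`. -/
def StarRefines {X : Type} (𝒱 𝒰 : Set (Set X)) : Prop :=
  ∀ x : X, ∃ U ∈ 𝒰, ptStar x 𝒱 ⊆ U

/-- A continuous partition of unity viewed as a map into `l¹(S)` with image in `Δ(S)`. -/
def IsPU {X S : Type} [TopologicalSpace X] (f : X → lp (fun _ : S => ℝ) 1) : Prop :=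
  Continuous f ∧ ∀ x : X, (∀ s : S, 0 ≤ f x s) ∧ HasSum (fun s => f x s) 1

/-- The partition of unity `f` is `𝒰`-small: each carrier lies in a member of `𝒰`. -/
def IsUSmall {X S : Type} [TopologicalSpace X] (𝒰 : Set (Set X))
    (f : X → lp (fun _ : S => ℝ) 1) : Prop :=
  ∀ s : S, ∃ U ∈ 𝒰, {x : X | f x s ≠ 0} ⊆ U

/-- There exists a `𝒰`-small partition of unity on `X`. -/
def ExistsUSmallPU {X : Type} [TopologicalSpace X] (𝒰 : Set (Set X)) : Prop :=
  ∃ (S : Type) (f : X → lp (fun _ : S => ℝ) 1), IsPU f ∧ IsUSmall 𝒰 f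

/-- An indexed family of sets is discrete. -/
def DiscreteFam {X S : Type} [TopologicalSpace X] (A : S → Set X) : Prop :=
  ∀ x : X, ∃ N ∈ nhds x, {s : S | (A s ∩ N).Nonempty}.Subsingleton

/-- A family of sets (as a set of sets) is discrete. -/
def DiscreteSetFam {X : Type} [TopologicalSpace X] (𝒜 : Set (Set X)) : Prop :=
  ∀ x : X, ∃ N ∈ nhds x, {A | A ∈ 𝒜 ∧ (A ∩ N).Nonempty}.Subsingleton

/-- `𝒰` has a σ-discrete closed refinement. -/
def HasSigmaDiscreteClosedRefinement {X : Type} [TopologicalSpace X]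
    (𝒰 : Set (Set X)) : Prop :=
  ∃ D : ℕ → Set (Set X), (∀ n, DiscreteSetFam (D n)) ∧
    (∀ n, ∀ F ∈ D n, IsClosed F) ∧
    (∀ n, ∀ F ∈ D n, ∃ U ∈ 𝒰, F ⊆ U) ∧
    ⋃₀ (⋃ n, D n) = univ

/-- `X` is collectionwise normal. -/
def CwNormal (X : Type) [TopologicalSpace X] : Prop :=
  ∀ (S : Type) (A : S → Set X), (∀ s, IsClosed (A s)) → DiscreteFam A →
    ∃ V : S → Set X, (∀ s, IsOpen (V s)) ∧ (∀ s, A s ⊆ V s) ∧ DiscreteFam V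

section AuxStmt17

lemma summable_of_subsingleton_support' {ι : Type} {f : ι → ℝ}
    (h : {i | f i ≠ 0}.Subsingleton) : Summable f := by
  by_cases hne : ∃ i, f i ≠ 0
  · obtain ⟨i₀, hi₀⟩ := hne
    exact (hasSum_single i₀ fun b hb => by
      by_contra hb'
      exact hb (h hb' hi₀)).summable
  · push_neg at hne
    have hf : f = fun _ => 0 := funext hne
    rw [hf]
    exact summable_zero

lemma tsum_le_of_subsingleton_support' {ι : Type} {f : ι → ℝ} {c : ℝ} (hc : 0 ≤ c)
    (h : {i | f i ≠ 0}.Subsingleton) (hle : ∀ i, f i ≤ c) : ∑' i, f i ≤ c := by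
  by_cases hne : ∃ i, f i ≠ 0
  · obtain ⟨i₀, hi₀⟩ := hne
    rw [(hasSum_single i₀ fun b hb => by
      by_contra hb'
      exact hb (h hb' hi₀)).tsum_eq]
    exact hle i₀
  · push_neg at hne
    have hf : f = fun _ => 0 := funext hne
    rw [hf, tsum_zero]
    exact hc

lemma normalSpace_of_cwNormal {X : Type} [TopologicalSpace X] (hX : CwNormal X) :
    NormalSpace X := by
  constructor
  intro s t hs ht hd
  set A : Bool → Set X := fun b => if b then s else t with hA
  have hAc : ∀ b, IsClosed (A b) := by intro b; cases b <;> simp [hA, hs, ht]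
  have hdisc : DiscreteFam A := by
    intro x
    by_cases hxs : x ∈ s
    · refine ⟨tᶜ, ht.isOpen_compl.mem_nhds (Set.disjoint_left.1 hd hxs), ?_⟩
      have key : ∀ c : Bool, (A c ∩ tᶜ).Nonempty → c = true := by
        rintro (_ | _) ⟨y, hy1, hy2⟩
        · exact absurd (by simpa [hA] using hy1) hy2
        · rfl
      intro b hb b' hb'
      rw [key b hb, key b' hb']
    · refine ⟨sᶜ, hs.isOpen_compl.mem_nhds hxs, ?_⟩
      have key : ∀ c : Bool, (A c ∩ sᶜ).Nonempty → c = false := by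
        rintro (_ | _) ⟨y, hy1, hy2⟩
        · rfl
        · exact absurd (by simpa [hA] using hy1) hy2
      intro b hb b' hb'
      rw [key b hb, key b' hb']
  obtain ⟨V, hVo, hVs, hVd⟩ := hX Bool A hAc hdisc
  refine ⟨V true, V false, hVo true, hVo false, by simpa [hA] using hVs true,
    by simpa [hA] using hVs false, ?_⟩
  rw [Set.disjoint_left]
  intro x hxT hxF
  obtain ⟨N, hN, hsub⟩ := hVd x
  have h1 : true ∈ {b : Bool | (V b ∩ N).Nonempty} := ⟨x, hxT, mem_of_mem_nhds hN⟩
  have h2 : false ∈ {b : Bool | (V b ∩ N).Nonempty} := ⟨x, hxF, mem_of_mem_nhds hN⟩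
  exact absurd (hsub h1 h2) (by simp)

/-- Coordinate evaluation on `ℓ¹` as a continuous linear map. -/
def evalCLM1 {ι : Type} (q : ι) : lp (fun _ : ι => ℝ) 1 →L[ℝ] ℝ :=
  LinearMap.mkContinuous
    { toFun := fun f => f q
      map_add' := fun f g => rfl
      map_smul' := fun c f => rfl }
    1 (fun f => by rw [one_mul]; exact lp.norm_apply_le_norm one_ne_zero f q)

lemma evalCLM1_apply {ι : Type} (q : ι) (f : lp (fun _ : ι => ℝ) 1) :
    evalCLM1 q f = f q := rfl

end AuxStmt17

set_option maxHeartbeats 1600000 in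
/-- In a collectionwise normal space, if a sequence of open covers `𝒰_n` satisfies that
every `x ∈ U ∈ 𝒰` has `st(x,𝒰_n) ⊆ U` for some `n`, then `𝒰` admits a `𝒰`-small
partition of unity. -/
theorem stmt17 (X : Type) [TopologicalSpace X] (hX : CwNormal X)
    (𝒰 : Set (Set X)) (hcov : IsOpenCover 𝒰)
    (u : ℕ → Set (Set X)) (hu : ∀ n, IsOpenCover (u n))
    (hstar : ∀ (x : X), ∀ U ∈ 𝒰, x ∈ U → ∃ n, ptStar x (u n) ⊆ U) :
    ExistsUSmallPU 𝒰 := by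
  classical
  haveI : NormalSpace X := normalSpace_of_cwNormal hX
  have hwf : WellFounded (WellOrderingRel (α := ↥𝒰)) := IsWellFounded.wf
  -- the "star-closure" sets
  set F : ℕ → ↥𝒰 → Set X := fun n U => {x | ptStar x (u n) ⊆ (U : Set X)} with hFdef
  have hFclosed : ∀ n U, IsClosed (F n U) := by
    intro n U
    rw [← isOpen_compl_iff]
    have hcompl : (F n U)ᶜ = ⋃₀ {V | V ∈ u n ∧ ¬ V ⊆ (U : Set X)} := by
      ext x
      simp only [hFdef, mem_compl_iff, mem_setOf_eq, mem_sUnion]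
      constructor
      · intro hx
        obtain ⟨y, hy, hyU⟩ := not_subset.1 hx
        obtain ⟨V, ⟨hVu, hxV⟩, hyV⟩ := hy
        exact ⟨V, ⟨hVu, fun hsubV => hyU (hsubV hyV)⟩, hxV⟩
      · rintro ⟨V, ⟨hVu, hVU⟩, hxV⟩ hsubst
        exact hVU fun y hy => hsubst ⟨V, ⟨hVu, hxV⟩, hy⟩
    rw [hcompl]
    exact isOpen_sUnion fun V hV => (hu n).1 V hV.1
  set Pre : ↥𝒰 → Set X := fun U =>
      ⋃ (U' : ↥𝒰) (_ : WellOrderingRel U' U), (U' : Set X) with hPredef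
  have hPreopen : ∀ U, IsOpen (Pre U) :=
    fun U => isOpen_iUnion fun U' => isOpen_iUnion fun _ => hcov.1 U' U'.2
  set K : ℕ → ↥𝒰 → Set X := fun n U => F n U \ Pre U with hKdef
  have hKclosed : ∀ n U, IsClosed (K n U) := fun n U => (hFclosed n U).sdiff (hPreopen U)
  have hFsub : ∀ n U, F n U ⊆ (U : Set X) := by
    intro n U x hx
    have hx' : x ∈ ⋃₀ u n := (hu n).2 ▸ mem_univ x
    obtain ⟨V, hVu, hxV⟩ := hx'
    exact hx ⟨V, ⟨hVu, hxV⟩, hxV⟩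
  have hKsub : ∀ n U, K n U ⊆ (U : Set X) := fun n U x hx => hFsub n U hx.1
  have hKcover : ∀ x : X, ∃ n U, x ∈ K n U := by
    intro x
    have hne : {U : ↥𝒰 | x ∈ (U : Set X)}.Nonempty := by
      have hx' : x ∈ ⋃₀ 𝒰 := hcov.2 ▸ mem_univ x
      obtain ⟨U, hU, hxU⟩ := hx'
      exact ⟨⟨U, hU⟩, hxU⟩
    set U₀ : ↥𝒰 := hwf.min _ hne with hU₀def
    obtain ⟨n, hn⟩ := hstar x (U₀ : Set X) U₀.2 (hwf.min_mem _ hne)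
    refine ⟨n, U₀, hn, ?_⟩
    intro hxPre
    simp only [hPredef, mem_iUnion] at hxPre
    obtain ⟨U', hrU', hxU'⟩ := hxPre
    exact hwf.not_lt_min _ hxU' hrU'
  have hKdisc : ∀ n, DiscreteFam (K n) := by
    intro n x
    have hx' : x ∈ ⋃₀ u n := (hu n).2 ▸ mem_univ x
    obtain ⟨W, hWu, hxW⟩ := hx'
    refine ⟨W, ((hu n).1 W hWu).mem_nhds hxW, ?_⟩
    have key : ∀ U U' : ↥𝒰, (K n U ∩ W).Nonempty → (K n U' ∩ W).Nonempty →
        ¬ WellOrderingRel U U' := by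
      rintro U U' ⟨y, hyK, hyW⟩ ⟨z, hzK, hzW⟩ hrUU'
      have hWstar : W ⊆ ptStar y (u n) := fun w hw => ⟨W, ⟨hWu, hyW⟩, hw⟩
      have hzU : z ∈ (U : Set X) := hyK.1 (hWstar hzW)
      exact hzK.2 (mem_iUnion.2 ⟨U, mem_iUnion.2 ⟨hrUU', hzU⟩⟩)
    intro U hU U' hU'
    rcases trichotomous_of WellOrderingRel U U' with h | h | h
    · exact absurd h (key U U' hU hU')
    · exact h
    · exact absurd h (key U' U hU' hU)
  -- collectionwise normality: discrete open expansions
  choose Vr hVro hVrs hVrd using fun n => hX ↥𝒰 (K n) (hKclosed n) (hKdisc n)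
  set V : ℕ → ↥𝒰 → Set X := fun n U => Vr n U ∩ (U : Set X) with hVdef
  have hVopen : ∀ n U, IsOpen (V n U) := fun n U => (hVro n U).inter (hcov.1 _ U.2)
  have hKV : ∀ n U, K n U ⊆ V n U := fun n U x hx => ⟨hVrs n U hx, hKsub n U hx⟩
  have hVdisc : ∀ n, DiscreteFam (V n) := by
    intro n x
    obtain ⟨N, hN, hsub⟩ := hVrd n x
    refine ⟨N, hN, fun U hU U' hU' => hsub ?_ ?_⟩
    · exact hU.mono (inter_subset_inter_left N inter_subset_left)
    · exact hU'.mono (inter_subset_inter_left N inter_subset_left)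
  -- Urysohn functions
  have hUry : ∀ n U, ∃ gnU : C(X, ℝ), EqOn gnU 0 (V n U)ᶜ ∧ EqOn gnU 1 (K n U) ∧
      ∀ x, gnU x ∈ Icc (0 : ℝ) 1 := by
    intro n U
    exact exists_continuous_zero_one_of_isClosed (hVopen n U).isClosed_compl (hKclosed n U)
      (Set.disjoint_left.2 fun x hxc hxK => hxc (hKV n U hxK))
  choose g hg0 hg1 hg01 using hUry
  have hgnn : ∀ n U x, 0 ≤ g n U x := fun n U x => (hg01 n U x).1
  have hgle : ∀ n U x, g n U x ≤ 1 := fun n U x => (hg01 n U x).2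
  have hgV : ∀ n U x, g n U x ≠ 0 → x ∈ V n U := by
    intro n U x h
    by_contra hx
    exact h (hg0 n U hx)
  -- weights
  set w : ℕ → ℝ := fun n => (1 / 2 : ℝ) ^ n with hwdef
  have hwpos : ∀ n, 0 < w n := fun n => pow_pos (by norm_num) n
  have hwsum : Summable w := summable_geometric_two
  set hfn : X → (Σ _ : ℕ, ↥𝒰) → ℝ := fun x p => w p.1 * g p.1 p.2 x with hfndef
  have hfnn : ∀ x p, 0 ≤ hfn x p := fun x p => mul_nonneg (hwpos p.1).le (hgnn _ _ _)
  have hfle : ∀ x p, hfn x p ≤ w p.1 := by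
    intro x p
    simpa using mul_le_mul_of_nonneg_left (hgle p.1 p.2 x) (hwpos p.1).le
  have hsubsing : ∀ n x, {U : ↥𝒰 | g n U x ≠ 0}.Subsingleton := by
    intro n x
    obtain ⟨N, hN, hsub⟩ := hVdisc n x
    intro U hU U' hU'
    exact hsub ⟨x, hgV n U x hU, mem_of_mem_nhds hN⟩ ⟨x, hgV n U' x hU', mem_of_mem_nhds hN⟩
  have hfibsum : ∀ x n, Summable fun U : ↥𝒰 => hfn x ⟨n, U⟩ := by
    intro x n
    apply summable_of_subsingleton_support'
    intro U hU U' hU'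
    simp only [mem_setOf_eq, hfndef] at hU hU'
    exact hsubsing n x (right_ne_zero_of_mul hU) (right_ne_zero_of_mul hU')
  have hfible : ∀ x n, (∑' U : ↥𝒰, hfn x ⟨n, U⟩) ≤ w n := by
    intro x n
    apply tsum_le_of_subsingleton_support' (hwpos n).le
    · intro U hU U' hU'
      simp only [mem_setOf_eq, hfndef] at hU hU'
      exact hsubsing n x (right_ne_zero_of_mul hU) (right_ne_zero_of_mul hU')
    · intro U
      exact hfle x ⟨n, U⟩
  have hsummable : ∀ x, Summable (hfn x) := by
    intro x
    refine (summable_sigma_of_nonneg (hfnn x)).2 ⟨hfibsum x, ?_⟩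
    exact Summable.of_nonneg_of_le (fun n => tsum_nonneg fun U => hfnn x ⟨n, U⟩)
      (hfible x) hwsum
  set T : X → ℝ := fun x => ∑' p, hfn x p with hTdef
  have hTpos : ∀ x, 0 < T x := by
    intro x
    obtain ⟨n, U, hxK⟩ := hKcover x
    have h1 : hfn x ⟨n, U⟩ = w n := by
      simp only [hfndef]
      rw [hg1 n U hxK]
      simp
    calc (0 : ℝ) < w n := hwpos n
      _ = hfn x ⟨n, U⟩ := h1.symm
      _ ≤ T x := Summable.le_tsum (hsummable x) ⟨n, U⟩ fun q _ => hfnn x q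
  -- the lp-valued blocks
  have hsupp : ∀ (n : ℕ) (x : X),
      {p : Σ _ : ℕ, ↥𝒰 | (if p.1 = n then hfn x p else 0) ≠ 0}.Subsingleton := by
    intro n x
    rintro ⟨m, U⟩ hU ⟨m', U'⟩ hU'
    simp only [mem_setOf_eq] at hU hU'
    split_ifs at hU hU' with h h'
    · have hm : m = n := h
      have hm' : m' = n := h'
      rw [hm] at hU
      rw [hm'] at hU'
      simp only [hfndef] at hU hU'
      have hUU' : U = U' := hsubsing n x (right_ne_zero_of_mul hU) (right_ne_zero_of_mul hU')
      rw [hm, hm', hUU']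
    · exact absurd rfl hU'
    · exact absurd rfl hU
    · exact absurd rfl hU
  have hnormsupp : ∀ (n : ℕ) (x : X),
      {p : Σ _ : ℕ, ↥𝒰 | ‖if p.1 = n then hfn x p else 0‖ ≠ 0}.Subsingleton := by
    intro n x p hp p' hp'
    exact hsupp n x (norm_ne_zero_iff.1 hp) (norm_ne_zero_iff.1 hp')
  have hHnmem : ∀ (n : ℕ) (x : X),
      Memℓp (fun p : Σ _ : ℕ, ↥𝒰 => if p.1 = n then hfn x p else 0) 1 := by
    intro n x
    apply memℓp_gen
    have hsummable' := summable_of_subsingleton_support' (hnormsupp n x)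
    simpa using hsummable'
  set Hn : ℕ → X → lp (fun _ : Σ _ : ℕ, ↥𝒰 => ℝ) 1 :=
    fun n x => ⟨fun p => if p.1 = n then hfn x p else 0, hHnmem n x⟩ with hHndef
  have hHncoe : ∀ n x p, Hn n x p = if p.1 = n then hfn x p else 0 := fun n x p => rfl
  have hHnorm : ∀ n x, ‖Hn n x‖ ≤ w n := by
    intro n x
    rw [lp.norm_eq_tsum_rpow (by norm_num) (Hn n x)]
    simp only [ENNReal.toReal_one, Real.rpow_one, one_div_one]
    have hle : (∑' p, ‖Hn n x p‖) ≤ w n := by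
      apply tsum_le_of_subsingleton_support' (hwpos n).le
      · intro p hp p' hp'
        simp only [mem_setOf_eq, hHncoe] at hp hp'
        exact hnormsupp n x hp hp'
      · intro p
        rw [hHncoe, Real.norm_eq_abs, abs_of_nonneg (by split_ifs with h; exacts [hfnn x p, le_rfl])]
        split_ifs with h
        · exact h ▸ hfle x p
        · exact (hwpos n).le
    exact hle
  have hHcont : ∀ n, Continuous (Hn n) := by
    intro n
    rw [continuous_iff_continuousAt]
    intro x₀
    obtain ⟨N, hN, hsubN⟩ := hVdisc n x₀
    obtain ⟨O, hON, hOopen, hxO⟩ := mem_nhds_iff.1 hN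
    by_cases hne : ∃ U : ↥𝒰, ∃ x ∈ O, g n U x ≠ 0
    · obtain ⟨U₀, x₁, hx₁, hgx₁⟩ := hne
      have huniq : ∀ (U : ↥𝒰) (x : X), x ∈ O → g n U x ≠ 0 → U = U₀ := by
        intro U x hx hg
        exact hsubN ⟨x, hgV n U x hg, hON hx⟩ ⟨x₁, hgV n U₀ x₁ hgx₁, hON hx₁⟩
      set e : lp (fun _ : Σ _ : ℕ, ↥𝒰 => ℝ) 1 :=
        lp.single 1 (⟨n, U₀⟩ : Σ _ : ℕ, ↥𝒰) (1 : ℝ) with hedef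
      have heq : ∀ x ∈ O, Hn n x = (w n * g n U₀ x) • e := by
        intro x hx
        apply lp.ext
        funext p
        rw [hHncoe]
        have hsmul : ∀ q, ((w n * g n U₀ x) • e) q = (w n * g n U₀ x) * e q := by
          intro q
          rw [lp.coeFn_smul]
          rfl
        rcases eq_or_ne p ⟨n, U₀⟩ with rfl | hp
        · rw [hsmul, hedef, lp.single_apply_self]
          simp [hfndef]
        · rw [hsmul, hedef, lp.single_apply_ne _ _ _ hp, mul_zero]
          rcases p with ⟨m, U⟩
          split_ifs with h
          · have hm : m = n := h
            simp only [hfndef]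
            show w m * (g m U) x = 0
            rw [hm]
            have hgz : (g n U) x = 0 := by
              by_contra hgz
              exact hp (by rw [hm, huniq U x hx hgz])
            rw [hgz, mul_zero]
          · rfl
      have hc : ContinuousAt (fun x => (w n * g n U₀ x) • e) x₀ :=
        ((continuous_const.mul (g n U₀).continuous).smul continuous_const).continuousAt
      exact hc.congr (Filter.eventuallyEq_of_mem (hOopen.mem_nhds hxO)
        fun x hx => (heq x hx).symm)
    · push_neg at hne
      have heq : ∀ x ∈ O, Hn n x = 0 := by
        intro x hx
        apply lp.ext
        funext p
        rw [hHncoe]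
        have h0 : (0 : lp (fun _ : Σ _ : ℕ, ↥𝒰 => ℝ) 1) p = 0 := rfl
        rw [h0]
        rcases p with ⟨m, U⟩
        split_ifs with h
        · have hm : m = n := h
          simp only [hfndef]
          show w m * (g m U) x = 0
          rw [hm, hne U x hx, mul_zero]
        · rfl
      exact continuousAt_const.congr (Filter.eventuallyEq_of_mem (hOopen.mem_nhds hxO)
        fun x hx => (heq x hx).symm)
  have hHsummable : ∀ x, Summable fun m => Hn m x :=
    fun x => Summable.of_norm_bounded hwsum fun m => hHnorm m x
  set Hs : X → lp (fun _ : Σ _ : ℕ, ↥𝒰 => ℝ) 1 := fun x => ∑' m, Hn m x with hHsdef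
  have hHscont : Continuous Hs := continuous_tsum hHcont hwsum fun m x => hHnorm m x
  have hHscoord : ∀ x p, Hs x p = hfn x p := by
    intro x p
    have h1 : Hs x p = ∑' m, Hn m x p := by
      have hmap := ContinuousLinearMap.map_tsum (evalCLM1 p) (hHsummable x)
      simpa only [evalCLM1_apply] using hmap
    rw [h1]
    rw [tsum_eq_single p.1 ?_]
    · rw [hHncoe, if_pos rfl]
    · intro m hm
      rw [hHncoe]
      exact if_neg fun h => hm h.symm
  have hTnorm : ∀ x, T x = ‖Hs x‖ := by
    intro x
    rw [lp.norm_eq_tsum_rpow (by norm_num) (Hs x)]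
    simp only [ENNReal.toReal_one, Real.rpow_one, one_div_one]
    simp only [hTdef]
    exact tsum_congr fun p => by
      rw [hHscoord, Real.norm_eq_abs, abs_of_nonneg (hfnn x p)]
  have hTcont : Continuous T := by
    have hTeq : T = fun x => ‖Hs x‖ := funext hTnorm
    rw [hTeq]
    exact hHscont.norm
  set f : X → lp (fun _ : Σ _ : ℕ, ↥𝒰 => ℝ) 1 := fun x => (T x)⁻¹ • Hs x with hfdef
  have hfcoord : ∀ x p, f x p = (T x)⁻¹ * hfn x p := by
    intro x p
    have h1 : f x p = (T x)⁻¹ * Hs x p := by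
      simp only [hfdef]
      rw [lp.coeFn_smul]
      rfl
    rw [h1, hHscoord]
  refine ⟨(Σ _ : ℕ, ↥𝒰), f, ⟨?_, ?_⟩, ?_⟩
  · exact (hTcont.inv₀ fun x => (hTpos x).ne').smul hHscont
  · intro x
    constructor
    · intro s
      rw [hfcoord]
      exact mul_nonneg (inv_nonneg.2 (hTpos x).le) (hfnn x s)
    · have h := ((hsummable x).hasSum).mul_left (T x)⁻¹
      rw [inv_mul_cancel₀ (hTpos x).ne'] at h
      have heq : (fun s => f x s) = fun s => (T x)⁻¹ * hfn x s := funext (hfcoord x)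
      rw [heq]
      exact h
  · rintro ⟨n, U⟩
    refine ⟨(U : Set X), U.2, ?_⟩
    intro x hx
    simp only [mem_setOf_eq] at hx
    rw [hfcoord] at hx
    have h1 : hfn x ⟨n, U⟩ ≠ 0 := right_ne_zero_of_mul hx
    simp only [hfndef] at h1
    have hg : g n U x ≠ 0 := right_ne_zero_of_mul h1
    exact (hgV n U x hg).2
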